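/- Let S be a sphere-like ranked poset of rank k. Then for every η ∈ C_{k-1} with d_{k-1}(η) = 0, there exists ξ ∈ C_k with d_k(ξ) = η. That is, every ℤ₂ (k−1)-cycle of S is a boundary (the (k−1)-st ℤ₂ homology of the associated chain complex vanishes in the sense that ker d_{k-1} ∩ C_{k-1} ⊆ im d_k). -/

import Mathlib

open scoped Classical

universe u

variable {α : Type u}

/-- A rank function on a partial order, compatible with strict order and covering. -/
structure RankStruct (α : Type u) [PartialOrder α] where
  rk : α → ℕ
  strict_mono : ∀ x y : α, x < y → rk x < rk y
  rk_covBy : ∀ x y : α, x ⋖ y → rk y = rk x + 1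

section Poset

variable [PartialOrder α]

/-- A matching on a ranked poset: a set of covering pairs, each element in at most one pair. -/
def IsMatching (M : Set (α × α)) : Prop :=
  (∀ p ∈ M, p.1 ⋖ p.2) ∧
    ∀ p ∈ M, ∀ q ∈ M, p ≠ q →
      p.1 ≠ q.1 ∧ p.1 ≠ q.2 ∧ p.2 ≠ q.1 ∧ p.2 ≠ q.2

/-- `IsMPathSteps M y l z` : `l` is the list of matched pairs `(x_i, y_i)` of an
`M`-path `y ⋗ x₁ ↣ y₁ ⋗ ⋯ ⋗ x_r ↣ y_r = z`. -/
def IsMPathSteps (M : Set (α × α)) : α → List (α × α) → α → Prop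
  | y, [], z => y = z
  | y, (x, y') :: rest, z => x ⋖ y ∧ (x, y') ∈ M ∧ y ≠ y' ∧ IsMPathSteps M y' rest z

/-- An acyclic matching: a matching with no non-trivial closed `M`-path. -/
def IsAcyclicMatching (M : Set (α × α)) : Prop :=
  IsMatching M ∧ ∀ (y : α) (l : List (α × α)), IsMPathSteps M y l y → l = []

/-- An element is `M`-critical if it occurs in no pair of `M`. -/
def MCritical (M : Set (α × α)) (x : α) : Prop :=
  ∀ p ∈ M, p.1 ≠ x ∧ p.2 ≠ x

/-- Parity (in `ℤ₂`) of the number of `M`-paths from `a` to `b`. -/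
noncomputable def ell (M : Set (α × α)) (a b : α) : ZMod 2 :=
  ({l : List (α × α) | IsMPathSteps M a l b}.ncard : ZMod 2)

/-- Combinatorially sphere-like ranked poset of rank `k`. -/
structure SphereLike (R : RankStruct α) (k : ℕ) : Prop where
  two_le : 2 ≤ k
  rk_le : ∀ x : α, R.rk x ≤ k
  exists_top : ∃ x : α, R.rk x = k
  two_covers : ∀ x : α, R.rk x = k - 1 → {y : α | x ⋖ y}.ncard = 2
  even_mid : ∀ y z : α, R.rk y = k → R.rk z = k - 2 →
      Even {x : α | R.rk x = k - 1 ∧ z ⋖ x ∧ x ⋖ y}.ncard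
  matching : ∃ M : Set (α × α), IsAcyclicMatching M ∧
      ∀ x : α, R.rk x = k - 1 → ¬ MCritical M x

/-- The `ℤ₂` boundary map on chains (functions `α → ℤ₂`). -/
noncomputable def bd [Fintype α] (c : α → ZMod 2) : α → ZMod 2 :=
  fun z => ∑ x : α, if z ⋖ x then c x else 0

end Poset

section AuxStmt4

open Finset

variable [PartialOrder α]

private lemma isMPathSteps_append {M : Set (α × α)} : ∀ {l l' : List (α × α)} {a b c : α},
    IsMPathSteps M a l b → IsMPathSteps M b l' c → IsMPathSteps M a (l ++ l') c := by
  intro l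
  induction l with
  | nil =>
    intro l' a b c h1 h2
    have hab : a = b := h1
    subst hab
    exact h2
  | cons p rest ih =>
    intro l' a b c h1 h2
    obtain ⟨x, y'⟩ := p
    obtain ⟨hc, hm, hne, hrest⟩ := h1
    exact ⟨hc, hm, hne, ih hrest h2⟩

/-- A single `M`-path step from `y` to `b`. -/
private def MStep (M : Set (α × α)) (y b : α) : Prop :=
  ∃ x, x ⋖ y ∧ (x, b) ∈ M ∧ y ≠ b

private lemma transGen_path {M : Set (α × α)} {y z : α}
    (h : Relation.TransGen (MStep M) y z) :
    ∃ l : List (α × α), l ≠ [] ∧ IsMPathSteps M y l z := by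
  induction h with
  | single h =>
    obtain ⟨x, hc, hm, hne⟩ := h
    exact ⟨[(x, _)], by simp, hc, hm, hne, rfl⟩
  | @tail b c _ h ih =>
    obtain ⟨x, hc, hm, hne⟩ := h
    obtain ⟨l, hl, hp⟩ := ih
    refine ⟨l ++ [(x, c)], by simp, isMPathSteps_append hp ?_⟩
    exact ⟨hc, hm, hne, rfl⟩

private lemma mstep_irrefl {M : Set (α × α)} (hA : IsAcyclicMatching M) (y : α) :
    ¬ Relation.TransGen (MStep M) y y := by
  intro h
  obtain ⟨l, hl, hp⟩ := transGen_path h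
  exact hl (hA.2 y l hp)

private lemma match_up_unique {M : Set (α × α)} (hM : IsMatching M) {x y y' : α}
    (h1 : (x, y) ∈ M) (h2 : (x, y') ∈ M) : y = y' := by
  by_contra hne
  have hpq : ((x, y) : α × α) ≠ (x, y') := by
    intro h; exact hne (congrArg Prod.snd h)
  exact (hM.2 _ h1 _ h2 hpq).1 rfl

private lemma match_up_inj {M : Set (α × α)} (hM : IsMatching M) {x x' y : α}
    (h1 : (x, y) ∈ M) (h2 : (x', y) ∈ M) : x = x' := by
  by_contra hne
  have hpq : ((x, y) : α × α) ≠ (x', y) := by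
    intro h; exact hne (congrArg Prod.fst h)
  exact (hM.2 _ h1 _ h2 hpq).2.2.2 rfl

/-- The up-match of an element (junk value if unmatched upwards). -/
private noncomputable def uM (M : Set (α × α)) (x : α) : α :=
  if h : ∃ y, (x, y) ∈ M then h.choose else x

private lemma uM_mem {M : Set (α × α)} {x : α} (h : ∃ y, (x, y) ∈ M) :
    (x, uM M x) ∈ M := by
  unfold uM
  rw [dif_pos h]
  exact h.choose_spec

variable [Fintype α]

/-- An injective `ℕ`-valued index compatible with the step relation. -/
private noncomputable def eIdx (M : Set (α × α)) (y : α) : ℕ :=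
  Fintype.card α * (Finset.univ.filter (fun b => Relation.TransGen (MStep M) y b)).card
    + (Fintype.equivFin α y).val

private lemma eIdx_lt {M : Set (α × α)} (hA : IsAcyclicMatching M) {y b : α}
    (h : MStep M y b) : eIdx M b < eIdx M y := by
  have hsub : (univ.filter (fun c => Relation.TransGen (MStep M) b c)) ⊂
      (univ.filter (fun c => Relation.TransGen (MStep M) y c)) := by
    constructor
    · intro c hc
      simp only [mem_filter, mem_univ, true_and] at hc ⊢
      exact (Relation.TransGen.single h).trans hc
    · intro hcon
      have hb : b ∈ univ.filter (fun c => Relation.TransGen (MStep M) y c) := by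
        simp only [mem_filter, mem_univ, true_and]
        exact Relation.TransGen.single h
      have := hcon hb
      simp only [mem_filter, mem_univ, true_and] at this
      exact mstep_irrefl hA b this
  have hcard := Finset.card_lt_card hsub
  have hlt : (Fintype.equivFin α b).val < Fintype.card α := (Fintype.equivFin α b).isLt
  set n := Fintype.card α
  set cb := (univ.filter (fun c => Relation.TransGen (MStep M) b c)).card
  set cy := (univ.filter (fun c => Relation.TransGen (MStep M) y c)).card
  calc n * cb + (Fintype.equivFin α b).val < n * cb + n := by omega
    _ = n * (cb + 1) := by ring
    _ ≤ n * cy := Nat.mul_le_mul_left n hcard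
    _ ≤ n * cy + (Fintype.equivFin α y).val := Nat.le_add_right _ _

private lemma eIdx_inj (M : Set (α × α)) : Function.Injective (eIdx M) := by
  intro a b h
  have key : ∀ c : α, (Fintype.equivFin α c).val = eIdx M c % Fintype.card α := by
    intro c
    unfold eIdx
    rw [Nat.mul_add_mod, Nat.mod_eq_of_lt (Fintype.equivFin α c).isLt]
  have : (Fintype.equivFin α a) = (Fintype.equivFin α b) := by
    apply Fin.ext
    rw [key a, key b, h]
  exact (Fintype.equivFin α).injective this

/-- The measure: sum over the up-matched support of powers of two. -/
private noncomputable def measM (M : Set (α × α)) (η : α → ZMod 2) : ℕ :=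
  ∑ x ∈ univ.filter (fun x => η x ≠ 0 ∧ ∃ y, (x, y) ∈ M), 2 ^ (eIdx M (uM M x))

private lemma zmod2_eq_one {a : ZMod 2} (h : a ≠ 0) : a = 1 := by
  revert h; revert a; decide

private lemma even_cast_zmod2 {n : ℕ} (h : Even n) : (n : ZMod 2) = 0 := by
  obtain ⟨r, rfl⟩ := h
  push_cast
  rw [← two_mul]
  rw [show (2 : ZMod 2) = 0 from rfl, zero_mul]

private lemma two_pow_geom (m : ℕ) : ∑ i ∈ Finset.range m, 2 ^ i = 2 ^ m - 1 := by
  induction m with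
  | zero => simp
  | succ p ih =>
    rw [Finset.sum_range_succ, ih]
    have := Nat.one_le_two_pow (n := p)
    have h2 : 2 ^ (p + 1) = 2 ^ p + 2 ^ p := by ring
    omega

private lemma sum_union_le' (s t : Finset α) (f : α → ℕ) :
    ∑ x ∈ s ∪ t, f x ≤ ∑ x ∈ s, f x + ∑ x ∈ t, f x := by
  rw [← Finset.union_sdiff_self_eq_union, Finset.sum_union Finset.disjoint_sdiff]
  exact add_le_add_right (Finset.sum_le_sum_of_subset (Finset.sdiff_subset)) _

/-- Base case: a cycle all of whose support is matched downwards is zero. -/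
private lemma aux_empty (R : RankStruct α) (k : ℕ)
    (M : Set (α × α)) (hA : IsAcyclicMatching M)
    (hnc : ∀ x : α, R.rk x = k - 1 → ¬ MCritical M x)
    (η : α → ZMod 2) (hη : ∀ x, η x ≠ 0 → R.rk x = k - 1) (h0 : bd η = 0)
    (hempty : univ.filter (fun x => η x ≠ 0 ∧ ∃ y, (x, y) ∈ M) = ∅) :
    η = 0 := by
  have hM : IsMatching M := hA.1
  by_contra hne
  set T : Finset α := univ.filter (fun x => η x ≠ 0) with hT
  have hTne : T.Nonempty := by
    by_contra hcon
    apply hne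
    funext x
    rw [Finset.not_nonempty_iff_eq_empty] at hcon
    by_contra hx
    have hx' : η x ≠ 0 := by simpa using hx
    have : x ∈ T := by simp [hT, hx']
    rw [hcon] at this
    exact absurd this (Finset.notMem_empty x)
  -- every support element has an `MStep`-predecessor in the support
  have hpre : ∀ x ∈ T, ∃ x' ∈ T, MStep M x' x := by
    intro x hx
    have hx0 : η x ≠ 0 := by simpa [hT] using hx
    have hxr : R.rk x = k - 1 := hη x hx0
    have hcrit := hnc x hxr
    unfold MCritical at hcrit
    push_neg at hcrit
    obtain ⟨p, hpM, hp⟩ := hcrit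
    rcases eq_or_ne p.1 x with hp1 | hp1
    · exfalso
      have hxmem : x ∈ univ.filter (fun x => η x ≠ 0 ∧ ∃ y, (x, y) ∈ M) := by
        refine Finset.mem_filter.2 ⟨Finset.mem_univ _, hx0, ⟨p.2, ?_⟩⟩
        rw [← hp1]
        simpa using hpM
      rw [hempty] at hxmem
      exact Finset.notMem_empty x hxmem
    · have hp2 : p.2 = x := hp hp1
      -- downward match (p.1, x) ∈ M
      set z := p.1 with hz
      have hzxM : (z, x) ∈ M := by
        have : (p.1, p.2) ∈ M := hpM
        rw [hp2] at this
        exact this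
      have hzx : z ⋖ x := hM.1 _ hzxM
      have hz0 : bd η z = 0 := congrFun h0 z
      by_contra hno
      push_neg at hno
      have hsum : ∑ x' : α, (if z ⋖ x' then η x' else 0) = η x := by
        rw [Finset.sum_eq_single_of_mem x (Finset.mem_univ x)]
        · rw [if_pos hzx]
        · intro b _ hbx
          by_cases hzb : z ⋖ b
          · rw [if_pos hzb]
            by_contra hb0
            have hbT : b ∈ T := by simp [hT, hb0]
            exact hno b hbT ⟨z, hzb, hzxM, hbx⟩
          · rw [if_neg hzb]
      have : bd η z = η x := hsum
      rw [hz0] at this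
      exact hx0 this.symm
  -- build an infinite backwards chain, contradiction with acyclicity
  have hstep : ∀ x : {a // a ∈ T}, ∃ x' : {a // a ∈ T}, MStep M x'.val x.val := by
    intro ⟨x, hx⟩
    obtain ⟨x', hx', hs⟩ := hpre x hx
    exact ⟨⟨x', hx'⟩, hs⟩
  choose f hf using hstep
  obtain ⟨x₀, hx₀⟩ := hTne
  have hiter : ∀ (d : ℕ) (x : {a // a ∈ T}), 0 < d →
      Relation.TransGen (MStep M) ((f^[d]) x).val x.val := by
    intro d
    induction d with
    | zero => intro x h; omega
    | succ m ihm =>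
      intro x _
      rcases Nat.eq_zero_or_pos m with hm | hm
      · subst hm
        simpa using Relation.TransGen.single (hf x)
      · rw [Function.iterate_succ_apply]
        exact (ihm (f x) hm).tail (hf x)
  have key : ∀ i j : ℕ, i < j → (f^[i]) ⟨x₀, hx₀⟩ = (f^[j]) ⟨x₀, hx₀⟩ → False := by
    intro i j hij heq
    have hdecomp : (f^[j]) ⟨x₀, hx₀⟩ = (f^[j - i]) ((f^[i]) ⟨x₀, hx₀⟩) := by
      rw [← Function.iterate_add_apply]
      congr 1
      omega
    set y := (f^[i]) ⟨x₀, hx₀⟩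
    have : Relation.TransGen (MStep M) ((f^[j - i]) y).val y.val :=
      hiter (j - i) y (by omega)
    rw [← hdecomp, ← heq] at this
    exact mstep_irrefl hA _ this
  obtain ⟨i, j, hij, heq⟩ :=
    Finite.exists_ne_map_eq_of_infinite (fun i : ℕ => (f^[i]) ⟨x₀, hx₀⟩)
  rcases lt_or_gt_of_ne hij with h | h
  · exact key i j h heq
  · exact key j i h heq.symm

/-- Main induction. -/
private lemma aux_main (R : RankStruct α) (k : ℕ) (hk : 2 ≤ k)
    (hmid : ∀ y z : α, R.rk y = k → R.rk z = k - 2 →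
      Even {x : α | R.rk x = k - 1 ∧ z ⋖ x ∧ x ⋖ y}.ncard)
    (M : Set (α × α)) (hA : IsAcyclicMatching M)
    (hnc : ∀ x : α, R.rk x = k - 1 → ¬ MCritical M x) :
    ∀ N : ℕ, ∀ η : α → ZMod 2, measM M η ≤ N →
      (∀ x, η x ≠ 0 → R.rk x = k - 1) → bd η = 0 →
      ∃ ξ : α → ZMod 2, (∀ x, ξ x ≠ 0 → R.rk x = k) ∧ bd ξ = η := by
  have hM : IsMatching M := hA.1
  intro N
  induction N with
  | zero =>
    intro η hmeas hη h0
    have hempty : univ.filter (fun x => η x ≠ 0 ∧ ∃ y, (x, y) ∈ M) = ∅ := by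
      by_contra hcon
      obtain ⟨x₀, hx₀⟩ := Finset.nonempty_iff_ne_empty.2 hcon
      have h1 : 2 ^ (eIdx M (uM M x₀)) ≤ measM M η := by
        unfold measM
        exact Finset.single_le_sum (f := fun x => 2 ^ eIdx M (uM M x))
          (fun i _ => Nat.zero_le _) hx₀
      have h2 : 1 ≤ 2 ^ (eIdx M (uM M x₀)) := Nat.one_le_two_pow
      omega
    have hη0 : η = 0 := aux_empty R k M hA hnc η hη h0 hempty
    refine ⟨0, ?_, ?_⟩
    · intro x hx; exact absurd rfl hx
    · rw [hη0]
      funext z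
      simp [bd]
  | succ n ih =>
    intro η hmeas hη h0
    by_cases hAs : univ.filter (fun x => η x ≠ 0 ∧ ∃ y, (x, y) ∈ M) = ∅
    · have hη0 : η = 0 := aux_empty R k M hA hnc η hη h0 hAs
      refine ⟨0, ?_, ?_⟩
      · intro x hx; exact absurd rfl hx
      · rw [hη0]
        funext z
        simp [bd]
    · obtain ⟨x₀, hx₀⟩ := Finset.nonempty_iff_ne_empty.2 hAs
      have hx₀' := Finset.mem_filter.1 hx₀
      have hηx₀ : η x₀ ≠ 0 := hx₀'.2.1
      have hup : ∃ y, (x₀, y) ∈ M := hx₀'.2.2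
      set y₀ := uM M x₀ with hy₀
      have hx₀M : (x₀, y₀) ∈ M := uM_mem hup
      have hcov : x₀ ⋖ y₀ := hM.1 _ hx₀M
      have hrx₀ : R.rk x₀ = k - 1 := hη x₀ hηx₀
      have hry₀ : R.rk y₀ = k := by
        have := R.rk_covBy _ _ hcov
        omega
      set δ : α → ZMod 2 := fun y => if y = y₀ then 1 else 0 with hδ
      have hbdδ : ∀ z, bd δ z = if z ⋖ y₀ then 1 else 0 := by
        intro z
        unfold bd
        rw [Finset.sum_eq_single_of_mem y₀ (Finset.mem_univ _)]
        · simp [hδ]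
        · intro b _ hb
          simp [hδ, hb]
      set η' : α → ZMod 2 := fun w => η w + bd δ w with hη'def
      -- support of η' has rank k - 1
      have hη'x : ∀ x, η' x ≠ 0 → R.rk x = k - 1 := by
        intro x hx
        by_cases h1 : η x ≠ 0
        · exact hη x h1
        · push_neg at h1
          have hbx : bd δ x ≠ 0 := by
            intro hb
            apply hx
            simp [hη'def, h1, hb]
          rw [hbdδ x] at hbx
          by_cases hc : x ⋖ y₀
          · have := R.rk_covBy _ _ hc
            omega
          · rw [if_neg hc] at hbx
            exact absurd rfl hbx
      -- bd (bd δ) = 0 via even_mid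
      have hbdbd : ∀ z, bd (bd δ) z = 0 := by
        intro z
        have hrw : bd (bd δ) z = ∑ x : α, (if z ⋖ x ∧ x ⋖ y₀ then (1 : ZMod 2) else 0) := by
          rw [show bd (bd δ) z = ∑ x : α, if z ⋖ x then bd δ x else 0 from rfl]
          apply Finset.sum_congr rfl
          intro x _
          rw [hbdδ x]
          by_cases h1 : z ⋖ x <;> by_cases h2 : x ⋖ y₀ <;> simp [h1, h2]
        rw [hrw, Finset.sum_boole]
        rcases (univ.filter (fun x => z ⋖ x ∧ x ⋖ y₀)).eq_empty_or_nonempty with he | hne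
        · rw [he]; simp
        · obtain ⟨w, hw⟩ := hne
          have hw' := Finset.mem_filter.1 hw
          have hrw1 := R.rk_covBy _ _ hw'.2.1
          have hrw2 := R.rk_covBy _ _ hw'.2.2
          have hrz : R.rk z = k - 2 := by omega
          have heven := hmid y₀ z hry₀ hrz
          have hset : {x : α | R.rk x = k - 1 ∧ z ⋖ x ∧ x ⋖ y₀} =
              ↑(univ.filter (fun x => z ⋖ x ∧ x ⋖ y₀)) := by
            ext x
            simp only [Set.mem_setOf_eq, Finset.coe_filter, Finset.mem_univ, true_and]
            constructor
            · rintro ⟨-, h1, h2⟩; exact ⟨h1, h2⟩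
            · rintro ⟨h1, h2⟩
              have := R.rk_covBy _ _ h1
              exact ⟨by omega, h1, h2⟩
          rw [hset, Set.ncard_coe_finset] at heven
          exact even_cast_zmod2 heven
      -- η' is a cycle
      have h0' : bd η' = 0 := by
        funext z
        have hsplit : bd η' z = bd η z + bd (bd δ) z := by
          unfold bd
          rw [← Finset.sum_add_distrib]
          apply Finset.sum_congr rfl
          intro x _
          by_cases h1 : z ⋖ x <;> simp [h1, hη'def, bd]
        rw [hsplit, hbdbd, congrFun h0 z]
        simp
      -- measure decreases
      have hηx₀1 : η x₀ = 1 := zmod2_eq_one hηx₀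
      have hη'x₀ : η' x₀ = 0 := by
        simp [hη'def, hbdδ x₀, if_pos hcov, hηx₀1]
        decide
      set D : Finset α := univ.filter (fun x => x ⋖ y₀ ∧ x ≠ x₀ ∧ ∃ y, (x, y) ∈ M) with hD
      have hsubset : univ.filter (fun x => η' x ≠ 0 ∧ ∃ y, (x, y) ∈ M) ⊆
          ((univ.filter (fun x => η x ≠ 0 ∧ ∃ y, (x, y) ∈ M)).erase x₀) ∪ D := by
        intro x hx
        obtain ⟨-, hx1, hx2⟩ := Finset.mem_filter.1 hx
        have hxx₀ : x ≠ x₀ := by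
          rintro rfl
          exact hx1 hη'x₀
        by_cases hzy : x ⋖ y₀
        · exact Finset.mem_union_right _
            (Finset.mem_filter.2 ⟨Finset.mem_univ _, hzy, hxx₀, hx2⟩)
        · have hδx : bd δ x = 0 := by rw [hbdδ x, if_neg hzy]
          have hηx : η x ≠ 0 := by
            intro hc
            apply hx1
            simp [hη'def, hc, hδx]
          exact Finset.mem_union_left _
            (Finset.mem_erase.2 ⟨hxx₀, Finset.mem_filter.2 ⟨Finset.mem_univ _, hηx, hx2⟩⟩)
      have hDlt : ∀ x ∈ D, eIdx M (uM M x) < eIdx M y₀ := by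
        intro x hx
        obtain ⟨-, hc, hne, hex⟩ := Finset.mem_filter.1 hx
        have hxM : (x, uM M x) ∈ M := uM_mem hex
        have huy : uM M x ≠ y₀ := by
          intro he
          rw [he] at hxM
          exact hne (match_up_inj hM hxM hx₀M)
        exact eIdx_lt hA ⟨x, hc, hxM, fun h => huy h.symm⟩
      have hDinj : ∀ a ∈ D, ∀ b ∈ D, eIdx M (uM M a) = eIdx M (uM M b) → a = b := by
        intro a ha b hb he
        have h1 : uM M a = uM M b := eIdx_inj M he
        obtain ⟨-, -, -, hexa⟩ := Finset.mem_filter.1 ha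
        obtain ⟨-, -, -, hexb⟩ := Finset.mem_filter.1 hb
        have haM : (a, uM M a) ∈ M := uM_mem hexa
        have hbM : (b, uM M a) ∈ M := by rw [h1]; exact uM_mem hexb
        exact match_up_inj hM haM hbM
      have hDsum : ∑ x ∈ D, 2 ^ (eIdx M (uM M x)) ≤ 2 ^ (eIdx M y₀) - 1 := by
        rw [← Finset.sum_image hDinj]
        have himg : D.image (fun x => eIdx M (uM M x)) ⊆ Finset.range (eIdx M y₀) := by
          intro i hi
          obtain ⟨x, hx, rfl⟩ := Finset.mem_image.1 hi
          exact Finset.mem_range.2 (hDlt x hx)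
        calc ∑ i ∈ D.image (fun x => eIdx M (uM M x)), 2 ^ i
            ≤ ∑ i ∈ Finset.range (eIdx M y₀), 2 ^ i :=
              Finset.sum_le_sum_of_subset himg
          _ = 2 ^ (eIdx M y₀) - 1 := two_pow_geom _
      have hmsplit : measM M η =
          (∑ x ∈ (univ.filter (fun x => η x ≠ 0 ∧ ∃ y, (x, y) ∈ M)).erase x₀,
            2 ^ (eIdx M (uM M x))) + 2 ^ (eIdx M y₀) := by
        unfold measM
        rw [← Finset.sum_erase_add _ _ hx₀]
      have hub : measM M η' ≤
          (∑ x ∈ (univ.filter (fun x => η x ≠ 0 ∧ ∃ y, (x, y) ∈ M)).erase x₀,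
            2 ^ (eIdx M (uM M x))) + (2 ^ (eIdx M y₀) - 1) := by
        unfold measM
        calc ∑ x ∈ univ.filter (fun x => η' x ≠ 0 ∧ ∃ y, (x, y) ∈ M),
              2 ^ (eIdx M (uM M x))
            ≤ ∑ x ∈ ((univ.filter (fun x => η x ≠ 0 ∧ ∃ y, (x, y) ∈ M)).erase x₀) ∪ D,
              2 ^ (eIdx M (uM M x)) := Finset.sum_le_sum_of_subset hsubset
          _ ≤ _ + ∑ x ∈ D, 2 ^ (eIdx M (uM M x)) := sum_union_le' _ _ _
          _ ≤ _ := add_le_add_right hDsum _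
      have hmeas' : measM M η' ≤ n := by
        have hp : 1 ≤ 2 ^ (eIdx M y₀) := Nat.one_le_two_pow
        omega
      obtain ⟨ξ', hξ'rk, hξ'bd⟩ := ih η' hmeas' hη'x h0'
      refine ⟨fun y => ξ' y + δ y, ?_, ?_⟩
      · intro x hx
        by_cases h1 : ξ' x ≠ 0
        · exact hξ'rk x h1
        · push_neg at h1
          have hδx : δ x ≠ 0 := by
            intro hc
            apply hx
            simp [h1, hc]
          have hxy : x = y₀ := by
            by_contra hc
            simp [hδ, hc] at hδx
          rw [hxy]
          exact hry₀
      · funext z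
        have hadd : bd (fun y => ξ' y + δ y) z = bd ξ' z + bd δ z := by
          unfold bd
          rw [← Finset.sum_add_distrib]
          apply Finset.sum_congr rfl
          intro x _
          by_cases h1 : z ⋖ x <;> simp [h1]
        rw [hadd, congrFun hξ'bd z]
        show η' z + bd δ z = η z
        rw [hη'def]
        show η z + bd δ z + bd δ z = η z
        rw [add_assoc, CharTwo.add_self_eq_zero, add_zero]

end AuxStmt4

/-- in a sphere-like ranked poset of rank `k`, every `ℤ₂` `(k-1)`-cycle
is a boundary. -/
theorem stmt4 [PartialOrder α] [Fintype α] (R : RankStruct α) (k : ℕ)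
    (hS : SphereLike R k) (η : α → ZMod 2)
    (hη : ∀ x, η x ≠ 0 → R.rk x = k - 1) (h0 : bd η = 0) :
    ∃ ξ : α → ZMod 2, (∀ x, ξ x ≠ 0 → R.rk x = k) ∧ bd ξ = η := by
  obtain ⟨M, hA, hnc⟩ := hS.matching
  exact aux_main R k hS.two_le hS.even_mid M hA hnc (measM M η) η le_rfl hη h0
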